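/- Let G be a group, X ⊆ G a subset closed under conjugation, and g an element of the submonoid Mon(X) generated by X. If x_1, …, x_n ∈ Mon(X) satisfy x_1·x_2⋯x_n = g and ℓ(x_1) + ℓ(x_2) + ⋯ + ℓ(x_n) = ℓ(g), then for every choice of indices 1 ≤ i_1 < i_2 < ⋯ < i_k ≤ n, the product x_{i_1}·x_{i_2}⋯x_{i_k} lies in the interval [1,g], i.e. x_{i_1}⋯x_{i_k} ≤ g. -/

import Mathlib

/-- The length of `g` as a word over the generating set `X`:
the minimal `n` such that `g` is a product of `n` elements of `X`. -/
noncomputable def wlen {G : Type*} [Group G] (X : Set G) (g : G) : ℕ :=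
  sInf {n | ∃ l : List G, l.length = n ∧ (∀ x ∈ l, x ∈ X) ∧ l.prod = g}

/-- The prefix partial order: `h ≤ g` iff `h ∈ Mon(X)`, `h⁻¹g ∈ Mon(X)` and
`ℓ(h) + ℓ(h⁻¹g) = ℓ(g)`.  Then `intLe X h g` says `h` lies in the interval `[1,g]`. -/
def intLe {G : Type*} [Group G] (X : Set G) (h g : G) : Prop :=
  h ∈ Submonoid.closure X ∧ h⁻¹ * g ∈ Submonoid.closure X ∧
    wlen X h + wlen X (h⁻¹ * g) = wlen X g

section Aux
variable {G : Type*} [Group G] {X : Set G}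

lemma wlen_le {g : G} {l : List G} (hl : ∀ x ∈ l, x ∈ X) (hp : l.prod = g) :
    wlen X g ≤ l.length := Nat.sInf_le ⟨l, rfl, hl, hp⟩

lemma wlen_one : wlen X (1 : G) = 0 :=
  Nat.sInf_eq_zero.2 (Or.inl ⟨[], rfl, by simp, rfl⟩)

lemma wlen_exists {g : G} (hg : g ∈ Submonoid.closure X) :
    ∃ l : List G, l.length = wlen X g ∧ (∀ x ∈ l, x ∈ X) ∧ l.prod = g := by
  obtain ⟨l, h1, h2⟩ := Submonoid.exists_list_of_mem_closure hg
  have : wlen X g ∈ {n | ∃ l : List G, l.length = n ∧ (∀ x ∈ l, x ∈ X) ∧ l.prod = g} :=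
    Nat.sInf_mem ⟨l.length, l, rfl, h1, h2⟩
  exact this

lemma wlen_mul_le {a b : G} (ha : a ∈ Submonoid.closure X) (hb : b ∈ Submonoid.closure X) :
    wlen X (a * b) ≤ wlen X a + wlen X b := by
  obtain ⟨la, hla, hmema, hpa⟩ := wlen_exists ha
  obtain ⟨lb, hlb, hmemb, hpb⟩ := wlen_exists hb
  have := wlen_le (X := X) (l := la ++ lb) (g := a * b)
    (by intro x hx; rcases List.mem_append.1 hx with h | h; exacts [hmema x h, hmemb x h])
    (by rw [List.prod_append, hpa, hpb])
  simpa [hla, hlb] using this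

lemma conj_list_prod (c : G) (l : List G) :
    (l.map (fun y => c * y * c⁻¹)).prod = c * l.prod * c⁻¹ := by
  induction l with
  | nil => simp
  | cons a t ih => simp only [List.map_cons, List.prod_cons, ih]; group

lemma wlen_conj_le (hX : ∀ g x, x ∈ X → g * x * g⁻¹ ∈ X) (c a : G)
    (ha : a ∈ Submonoid.closure X) :
    wlen X (c * a * c⁻¹) ≤ wlen X a := by
  obtain ⟨l, hl, hmem, hp⟩ := wlen_exists ha
  have := wlen_le (X := X) (l := l.map (fun y => c * y * c⁻¹)) (g := c * a * c⁻¹)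
    (by intro x hx; obtain ⟨y, hy, rfl⟩ := List.mem_map.1 hx; exact hX c y (hmem y hy))
    (by rw [conj_list_prod, hp])
  simpa [hl] using this

lemma conj_mem_closure (hX : ∀ g x, x ∈ X → g * x * g⁻¹ ∈ X) (c a : G)
    (ha : a ∈ Submonoid.closure X) :
    c * a * c⁻¹ ∈ Submonoid.closure X := by
  obtain ⟨l, _, hmem, hp⟩ := wlen_exists ha
  rw [← hp, ← conj_list_prod]
  exact list_prod_mem (fun x hx => by
    obtain ⟨y, hy, rfl⟩ := List.mem_map.1 hx
    exact Submonoid.subset_closure (hX c y (hmem y hy)))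

lemma wlen_list_prod_le : ∀ {l : List G}, (∀ a ∈ l, a ∈ Submonoid.closure X) →
    wlen X l.prod ≤ (l.map (wlen X)).sum := by
  intro l
  induction l with
  | nil => intro _; simp [wlen_one]
  | cons a t ih =>
    intro hmem
    have haM := hmem a List.mem_cons_self
    have htM : ∀ b ∈ t, b ∈ Submonoid.closure X := fun b hb => hmem b (List.mem_cons_of_mem a hb)
    have h1 : wlen X (a * t.prod) ≤ wlen X a + wlen X t.prod :=
      wlen_mul_le haM (list_prod_mem htM)
    have h2 := ih htM
    simp only [List.prod_cons, List.map_cons, List.sum_cons]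
    omega

/-- Key rearrangement lemma: a subproduct can be moved to a prefix without
increasing the total length budget. -/
lemma key (hX : ∀ g x, x ∈ X → g * x * g⁻¹ ∈ X) :
    ∀ {S L : List G}, S.Sublist L → (∀ a ∈ L, a ∈ Submonoid.closure X) →
    ∃ r ∈ Submonoid.closure X, L.prod = S.prod * r ∧
      (S.map (wlen X)).sum + wlen X r ≤ (L.map (wlen X)).sum := by
  intro S L h
  induction h with
  | slnil => exact fun _ => ⟨1, Submonoid.one_mem _, by simp, by simp [wlen_one]⟩
  | @cons S' L' a h ih =>
    intro hmem
    obtain ⟨r, hr, hprod, hlen⟩ := ih (fun b hb => hmem b (List.mem_cons_of_mem a hb))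
    have haM : a ∈ Submonoid.closure X := hmem a List.mem_cons_self
    set c : G := S'.prod⁻¹ * a * S'.prod with hc
    have hc' : c = S'.prod⁻¹ * a * (S'.prod⁻¹)⁻¹ := by rw [hc]; group
    have hcM : c ∈ Submonoid.closure X := hc' ▸ conj_mem_closure hX _ a haM
    refine ⟨c * r, Submonoid.mul_mem _ hcM hr, ?_, ?_⟩
    · rw [List.prod_cons, hprod, hc]; group
    · have h1 : wlen X (c * r) ≤ wlen X c + wlen X r := wlen_mul_le hcM hr
      have h2 : wlen X c ≤ wlen X a := hc' ▸ wlen_conj_le hX _ a haM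
      simp only [List.map_cons, List.sum_cons]
      omega
  | cons_cons a h ih =>
    intro hmem
    obtain ⟨r, hr, hprod, hlen⟩ := ih (fun b hb => hmem b (List.mem_cons_of_mem a hb))
    refine ⟨r, hr, ?_, ?_⟩
    · rw [List.prod_cons, List.prod_cons, hprod, mul_assoc]
    · simp only [List.map_cons, List.sum_cons]; omega

end Aux

/-- if `x₁ ⋯ xₙ = g` with `ℓ(x₁) + ⋯ + ℓ(xₙ) = ℓ(g)` and all `xᵢ ∈ Mon(X)`,
then any subproduct `x_{i₁} ⋯ x_{i_k}` (indices strictly increasing) lies in `[1,g]`. -/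
theorem stmt0 {G : Type*} [Group G] (X : Set G)
    (hX : ∀ g x, x ∈ X → g * x * g⁻¹ ∈ X)
    (g : G) (hg : g ∈ Submonoid.closure X)
    (n : ℕ) (x : Fin n → G)
    (hmem : ∀ i, x i ∈ Submonoid.closure X)
    (hprod : (List.ofFn x).prod = g)
    (hlen : ∑ i, wlen X (x i) = wlen X g)
    (k : ℕ) (ι : Fin k → Fin n) (hι : StrictMono ι) :
    intLe X ((List.ofFn (x ∘ ι)).prod) g := by
  have hsub : (List.ofFn (x ∘ ι)).Sublist (List.ofFn x) := by
    have h1 : List.ofFn (x ∘ ι) = (List.ofFn ι).map x := List.map_ofFn.symm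
    have h2 : List.ofFn x = (List.finRange n).map x := List.ofFn_eq_map
    rw [h1, h2]
    refine List.Sublist.map x ?_
    haveI : IsAntisymm (Fin n) (· ≤ ·) := ⟨fun a b h1 h2 => le_antisymm h1 h2⟩
    refine List.sublist_of_subperm_of_pairwise (r := (· ≤ ·)) ?_ ?_ ?_
    · refine List.Nodup.subperm ?_ (fun i _ => List.mem_finRange i)
      exact (List.nodup_ofFn).2 hι.injective
    · exact (List.pairwise_ofFn).2 fun i j hij => (hι hij).le
    · exact List.pairwise_le_finRange n
  have hmemL : ∀ a ∈ List.ofFn x, a ∈ Submonoid.closure X := by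
    intro a ha
    obtain ⟨i, rfl⟩ := List.mem_ofFn.1 ha
    exact hmem i
  obtain ⟨r, hr, hLprod, hkey⟩ := key hX hsub hmemL
  have hhM : (List.ofFn (x ∘ ι)).prod ∈ Submonoid.closure X :=
    list_prod_mem (fun a ha => hmemL a (hsub.subset ha))
  have hinv : (List.ofFn (x ∘ ι)).prod⁻¹ * g = r := by rw [← hprod, hLprod]; group
  have hsumL : ((List.ofFn x).map (wlen X)).sum = wlen X g := by
    rw [List.map_ofFn, List.sum_ofFn]; exact hlen
  have hS_le : wlen X ((List.ofFn (x ∘ ι)).prod) ≤ ((List.ofFn (x ∘ ι)).map (wlen X)).sum :=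
    wlen_list_prod_le (fun a ha => hmemL a (hsub.subset ha))
  have hge : wlen X g ≤ wlen X ((List.ofFn (x ∘ ι)).prod) + wlen X r := by
    have : g = (List.ofFn (x ∘ ι)).prod * r := by rw [← hprod, hLprod]
    rw [this]; exact wlen_mul_le hhM hr
  refine ⟨hhM, hinv ▸ hr, ?_⟩
  rw [hinv]
  omega
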